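/- (Lipschitz regularity of the free boundary) Let d ≥ 2 and let u₀ : ℝ^d → [0,∞) be continuous on ℝ^d ∖ {0}, with bounded support, and satisfy: (i) there is c₀ > 0 such that {x ∈ ℝ^d : 0 < |x| ≤ c₀} ⊆ {u₀ > 0}; (ii) for every e ∈ 𝒩 and all x¹, x² ∈ ℝ^d ∖ {0} such that x¹ − x² is a nonzero real multiple of e, |x¹| ≤ |x²| implies u₀(x¹) ≥ u₀(x²). Let V₀ be the support of u₀ (the closure of {u₀ > 0}). Then ∂V₀ is locally a Lipschitz graph: for every x⁰ ∈ ∂V₀ there exist r > 0, L > 0, a unit vector ν ∈ ℝ^d, and an L-Lipschitz function g : ν^⊥ → ℝ (ν^⊥ the orthogonal complement of ν) such that V₀ ∩ B(x⁰, r) = {y + t·ν : y ∈ ν^⊥, t ≤ g(y)} ∩ B(x⁰, r). -/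

import Mathlib

open scoped RealInnerProductSpace
open Filter Topology

namespace LipschitzFB

/-- The set of directions `𝒩 = {eᵢ, eᵢ + eⱼ, eᵢ - eⱼ : 1 ≤ i ≠ j ≤ d}` in `ℝ^d`. -/
def dirNE (d : ℕ) : Set (EuclideanSpace ℝ (Fin d)) :=
  {v | ∃ i j : Fin d, i ≠ j ∧
    (v = EuclideanSpace.single i 1 ∨
     v = EuclideanSpace.single i 1 + EuclideanSpace.single j 1 ∨
     v = EuclideanSpace.single i 1 - EuclideanSpace.single j 1)}


lemma dirNE_ne_zero {d : ℕ} {e : EuclideanSpace ℝ (Fin d)} (he : e ∈ dirNE d) : e ≠ 0 := by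
  obtain ⟨i, j, hij, h⟩ := he
  have : ⟪EuclideanSpace.single i (1:ℝ), e⟫ = 1 := by
    rcases h with rfl | rfl | rfl
    · simp [EuclideanSpace.inner_single_left, EuclideanSpace.single_apply]
    · rw [inner_add_right]
      simp [EuclideanSpace.inner_single_left, EuclideanSpace.single_apply, hij, Ne.symm hij]
    · rw [inner_sub_right]
      simp [EuclideanSpace.inner_single_left, EuclideanSpace.single_apply, hij, Ne.symm hij]
  intro h0
  rw [h0, inner_zero_right] at this
  norm_num at this


section

variable {d : ℕ} (u₀ : EuclideanSpace ℝ (Fin d) → ℝ) (c₀ : ℝ)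

lemma zero_mem_V' (hd : 2 ≤ d) (hc₀ : 0 < c₀)
    (hball : {x : EuclideanSpace ℝ (Fin d) | 0 < ‖x‖ ∧ ‖x‖ ≤ c₀} ⊆ {x | 0 < u₀ x}) :
    (0 : EuclideanSpace ℝ (Fin d)) ∈ closure {x | 0 < u₀ x} := by
  have hd0 : 0 < d := by omega
  set i0 : Fin d := ⟨0, hd0⟩
  set w : ℕ → EuclideanSpace ℝ (Fin d) :=
    fun n => (c₀ * (1 / (n + 1))) • EuclideanSpace.single i0 (1:ℝ) with hw
  have htend : Tendsto w atTop (𝓝 0) := by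
    have h1 : Tendsto (fun n : ℕ => c₀ * (1 / (n + 1))) atTop (𝓝 0) := by
      simpa using (tendsto_one_div_add_atTop_nhds_zero_nat.const_mul c₀)
    simpa [hw, one_div] using h1.smul_const (EuclideanSpace.single i0 (1:ℝ))
  refine mem_closure_of_tendsto htend (Eventually.of_forall fun n => ?_)
  apply hball
  have hpos : 0 < c₀ * (1 / (n + 1)) := by positivity
  have hnorm : ‖w n‖ = c₀ * (1 / (n + 1)) := by
    rw [hw]
    simp only [norm_smul, EuclideanSpace.norm_single]
    rw [one_div] at hpos ⊢; rw [Real.norm_eq_abs, abs_of_pos hpos]; simp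
  constructor
  · rw [hnorm]; exact hpos
  · rw [hnorm]
    calc c₀ * (1 / (n + 1)) ≤ c₀ * 1 := by
          apply mul_le_mul_of_nonneg_left _ hc₀.le
          rw [div_le_one] <;> [skip; positivity]
          linarith [Nat.cast_nonneg (α := ℝ) n]
      _ = c₀ := mul_one c₀


end

section
variable {d : ℕ} {u₀ : EuclideanSpace ℝ (Fin d) → ℝ} {c₀ : ℝ}

variable (hmono : ∀ e ∈ dirNE d, ∀ x1 x2 : EuclideanSpace ℝ (Fin d),
      x1 ≠ 0 → x2 ≠ 0 → (∃ t : ℝ, t ≠ 0 ∧ x1 - x2 = t • e) →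
      ‖x1‖ ≤ ‖x2‖ → u₀ x2 ≤ u₀ x1)

include hmono in
lemma monoV_strict {x : EuclideanSpace ℝ (Fin d)} (hx : x ∈ closure {x | 0 < u₀ x})
    {e : EuclideanSpace ℝ (Fin d)} (he : e ∈ dirNE d) {t : ℝ}
    (hlt : ‖x + t • e‖ < ‖x‖) (hne : x + t • e ≠ 0) :
    x + t • e ∈ closure {x | 0 < u₀ x} := by
  have hx0 : x ≠ 0 := by
    intro h; rw [h] at hlt; simp at hlt
    exact absurd hlt (not_lt.2 (norm_nonneg _))
  have ht : t ≠ 0 := by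
    rintro rfl; simp at hlt
  obtain ⟨w, hwP, hwl⟩ := mem_closure_iff_seq_limit.1 hx
  have htend : Tendsto (fun n => w n + t • e) atTop (𝓝 (x + t • e)) :=
    hwl.add tendsto_const_nhds
  have h1 : ∀ᶠ n in atTop, ‖w n + t • e‖ < ‖w n‖ :=
    (htend.norm).eventually_lt hwl.norm hlt
  have h2 : ∀ᶠ n in atTop, w n ≠ 0 := hwl.eventually_ne hx0
  have h3 : ∀ᶠ n in atTop, w n + t • e ≠ 0 := htend.eventually_ne hne
  refine mem_closure_of_tendsto htend ?_
  filter_upwards [h1, h2, h3] with n hn1 hn2 hn3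
  have := hmono e he (w n + t • e) (w n) hn3 hn2 ⟨t, ht, by abel⟩ hn1.le
  exact lt_of_lt_of_le (hwP n) this

include hmono in
lemma monoV (hd : 2 ≤ d) (hc₀ : 0 < c₀)
    (hball : {x : EuclideanSpace ℝ (Fin d) | 0 < ‖x‖ ∧ ‖x‖ ≤ c₀} ⊆ {x | 0 < u₀ x})
    {x : EuclideanSpace ℝ (Fin d)} (hx : x ∈ closure {x | 0 < u₀ x})
    {e : EuclideanSpace ℝ (Fin d)} (he : e ∈ dirNE d) (t : ℝ)
    (hle : ‖x + t • e‖ ≤ ‖x‖) :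
    x + t • e ∈ closure {x | 0 < u₀ x} := by
  rcases eq_or_ne (x + t • e) 0 with h0 | h0
  · rw [h0]; exact zero_mem_V' u₀ c₀ hd hc₀ hball
  rcases lt_or_eq_of_le hle with hlt | heq
  · exact monoV_strict hmono hx he hlt h0
  rcases eq_or_ne t 0 with rfl | ht
  · simpa using hx
  have hw : t • e ≠ 0 := smul_ne_zero ht (dirNE_ne_zero he)
  have hw2 : (0:ℝ) < t^2 * ‖e‖^2 := by
    have h1 : 0 < |t| := abs_pos.2 ht
    have h2 : 0 < ‖e‖ := norm_pos_iff.2 (dirNE_ne_zero he)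
    calc (0:ℝ) < |t|^2 * ‖e‖^2 := by positivity
      _ = t^2 * ‖e‖^2 := by rw [sq_abs]
  have hkey : ∀ σ : ℝ, 0 < σ → σ < 1 → ‖x + (σ * t) • e‖ < ‖x‖ := by
    intro σ h0σ hσ1
    have hsq : ‖x + (σ * t) • e‖^2 < ‖x‖^2 := by
      have e1 : ‖x + t • e‖^2 = ‖x‖^2 + 2 * ⟪x, t • e⟫ + ‖t • e‖^2 := norm_add_sq_real x (t • e)
      have e2 : ‖x + (σ * t) • e‖^2 = ‖x‖^2 + 2 * ⟪x, (σ * t) • e⟫ + ‖(σ * t) • e‖^2 :=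
        norm_add_sq_real x ((σ * t) • e)
      have i1 : ⟪x, t • e⟫ = t * ⟪x, e⟫ := real_inner_smul_right x e t
      have i2 : ⟪x, (σ * t) • e⟫ = (σ * t) * ⟪x, e⟫ := real_inner_smul_right x e (σ * t)
      have n1 : ‖t • e‖^2 = t^2 * ‖e‖^2 := by
        rw [norm_smul, mul_pow, Real.norm_eq_abs, sq_abs]
      have n2 : ‖(σ * t) • e‖^2 = (σ * t)^2 * ‖e‖^2 := by
        rw [norm_smul, mul_pow, Real.norm_eq_abs, sq_abs]
      have heq2 : ‖x‖^2 + 2 * (t * ⟪x, e⟫) + t^2 * ‖e‖^2 = ‖x‖^2 := by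
        rw [← i1, ← n1, ← e1, heq]
      rw [e2, i2, n2]
      have hσ' : 0 < 1 - σ := by linarith
      nlinarith [hw2, mul_pos (mul_pos h0σ hσ') hw2]
    exact lt_of_pow_lt_pow_left₀ 2 (norm_nonneg x) hsq
  -- now take the limit σ → 1⁻
  set f : ℝ → EuclideanSpace ℝ (Fin d) := fun σ => x + (σ * t) • e with hf
  have hfc : Continuous f := by
    apply continuous_const.add
    exact (continuous_id.mul continuous_const).smul continuous_const
  have hf1 : f 1 = x + t • e := by simp [hf]
  have htend : Tendsto f (𝓝[<] (1:ℝ)) (𝓝 (x + t • e)) := by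
    rw [← hf1]
    exact (hfc.tendsto 1).mono_left nhdsWithin_le_nhds
  have hev : ∀ᶠ σ in 𝓝[<] (1:ℝ), f σ ∈ closure {x | 0 < u₀ x} := by
    have hev1 : ∀ᶠ σ in 𝓝[<] (1:ℝ), f σ ≠ 0 := by
      have : ∀ᶠ σ in 𝓝 (1:ℝ), f σ ≠ 0 := by
        have : {z : EuclideanSpace ℝ (Fin d) | z ≠ 0} ∈ 𝓝 (x + t • e) :=
          (isOpen_ne).mem_nhds h0
        rw [← hf1] at this
        exact hfc.continuousAt.eventually_mem this
      exact this.filter_mono nhdsWithin_le_nhds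
    have hev2 : ∀ᶠ σ in 𝓝[<] (1:ℝ), σ ∈ Set.Ioo (0:ℝ) 1 := by
      have : Set.Ioo (0:ℝ) 1 ∈ 𝓝[<] (1:ℝ) := by
        apply Ioo_mem_nhdsLT
        norm_num
      exact this
    filter_upwards [hev1, hev2] with σ h1 h2
    exact monoV_strict hmono hx he (hkey σ h2.1 h2.2) h1
  have : x + t • e ∈ closure (closure {x | 0 < u₀ x}) :=
    mem_closure_of_tendsto htend hev
  rwa [closure_closure] at this


end

set_option maxHeartbeats 2000000 in
/-- Lipschitz regularity of the free boundary. Let `d ≥ 2` and let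
`u₀ : ℝ^d → [0,∞)` be continuous on `ℝ^d ∖ {0}`, with bounded support, such that
(i) `{0 < |x| ≤ c₀} ⊆ {u₀ > 0}` for some `c₀ > 0`, and (ii) `u₀` is monotone along all
directions of `𝒩`: for `x¹ - x²` a nonzero multiple of `e ∈ 𝒩`, `|x¹| ≤ |x²|` implies
`u₀(x¹) ≥ u₀(x²)`. Let `V₀` be the support (closure of `{u₀ > 0}`). Then `∂V₀` is
locally a Lipschitz graph: for every `x⁰ ∈ ∂V₀` there are `r, L > 0`, a unit vector
`ν`, and an `L`-Lipschitz function `g : ν^⊥ → ℝ` such that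
`V₀ ∩ B(x⁰, r) = {y + t·ν : y ∈ ν^⊥, t ≤ g(y)} ∩ B(x⁰, r)`. -/
theorem stmt11 {d : ℕ} (hd : 2 ≤ d)
    (u₀ : EuclideanSpace ℝ (Fin d) → ℝ)
    (hcont : ContinuousOn u₀ {x | x ≠ 0})
    (hnonneg : ∀ x, 0 ≤ u₀ x)
    (hbdd : Bornology.IsBounded (Function.support u₀))
    (c₀ : ℝ) (hc₀ : 0 < c₀)
    (hball : {x : EuclideanSpace ℝ (Fin d) | 0 < ‖x‖ ∧ ‖x‖ ≤ c₀} ⊆ {x | 0 < u₀ x})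
    (hmono : ∀ e ∈ dirNE d, ∀ x1 x2 : EuclideanSpace ℝ (Fin d),
      x1 ≠ 0 → x2 ≠ 0 → (∃ t : ℝ, t ≠ 0 ∧ x1 - x2 = t • e) →
      ‖x1‖ ≤ ‖x2‖ → u₀ x2 ≤ u₀ x1) :
    ∀ x0 ∈ frontier (closure {x | 0 < u₀ x}),
      ∃ (r L : ℝ) (ν : EuclideanSpace ℝ (Fin d)), 0 < r ∧ 0 < L ∧ ‖ν‖ = 1 ∧
        ∃ g : (ℝ ∙ ν)ᗮ → ℝ,
          (∀ y1 y2 : (ℝ ∙ ν)ᗮ, |g y1 - g y2| ≤ L * ‖(y1 : EuclideanSpace ℝ (Fin d)) - y2‖) ∧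
          closure {x | 0 < u₀ x} ∩ Metric.ball x0 r =
            {z : EuclideanSpace ℝ (Fin d) |
              ∃ (y : (ℝ ∙ ν)ᗮ) (t : ℝ), t ≤ g y ∧
                z = (y : EuclideanSpace ℝ (Fin d)) + t • ν} ∩ Metric.ball x0 r := by
  classical
  intro x0 hx0
  set V : Set (EuclideanSpace ℝ (Fin d)) := closure {x | 0 < u₀ x} with hVdef
  have hVclosed : IsClosed V := isClosed_closure
  have hx0V : x0 ∈ V := by
    have h1 : frontier V ⊆ V := hVclosed.frontier_subset
    exact h1 hx0
  have hx0ne : x0 ≠ 0 := by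
    rintro rfl
    have hball0 : Metric.ball (0 : EuclideanSpace ℝ (Fin d)) c₀ ⊆ V := by
      intro z hz
      rcases eq_or_ne z 0 with rfl | hz0
      · exact zero_mem_V' u₀ c₀ hd hc₀ hball
      · refine subset_closure (hball ⟨norm_pos_iff.2 hz0, ?_⟩)
        have := Metric.mem_ball.1 hz
        rw [dist_zero_right] at this
        linarith
    have hint : (0 : EuclideanSpace ℝ (Fin d)) ∈ interior V :=
      interior_maximal hball0 Metric.isOpen_ball (Metric.mem_ball_self hc₀)
    exact hx0.2 hint
  obtain ⟨i, hi⟩ : ∃ i : Fin d, x0 i ≠ 0 := by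
    by_contra hcon
    push_neg at hcon
    exact hx0ne (PiLp.ext hcon)
  set m : ℝ := |x0 i| with hm
  have hm0 : 0 < m := abs_pos.2 hi
  set sg : Fin d → ℝ := fun j => if 0 ≤ x0 j then 1 else -1 with hsg
  have hsg_cases : ∀ j, sg j = 1 ∨ sg j = -1 := by
    intro j; by_cases h : 0 ≤ x0 j <;> simp [hsg, h]
  have hsg_sq : ∀ j, sg j * sg j = 1 := by
    intro j; rcases hsg_cases j with h | h <;> rw [h] <;> norm_num
  have hsg_abs : ∀ j, |sg j| = 1 := by
    intro j; rcases hsg_cases j with h | h <;> rw [h] <;> norm_num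
  have hsg_mul : ∀ j, sg j * x0 j = |x0 j| := by
    intro j
    by_cases h : 0 ≤ x0 j
    · simp [hsg, h, abs_of_nonneg h]
    · push_neg at h
      simp [hsg, not_le.2 h, abs_of_neg h]
  set Ed : Fin d → EuclideanSpace ℝ (Fin d) := fun j => EuclideanSpace.single j (1:ℝ) with hEd
  have hEdnorm : ∀ j, ‖Ed j‖ = 1 := by
    intro j; rw [hEd]; simp [EuclideanSpace.norm_single]
  have hEdinner : ∀ (j) (x : EuclideanSpace ℝ (Fin d)), ⟪Ed j, x⟫ = x j := by
    intro j x; rw [hEd]; simp [EuclideanSpace.inner_single_left]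
  have hEdinner2 : ∀ j k, ⟪Ed j, Ed k⟫ = if j = k then (1:ℝ) else 0 := by
    intro j k
    rw [hEdinner]
    simp [hEd, EuclideanSpace.single_apply]
  set eN : Fin d → EuclideanSpace ℝ (Fin d) := fun j =>
    if j = i then Ed i else if sg i * sg j = 1 then Ed i + Ed j else Ed i - Ed j with heNdef
  have heN_mem : ∀ j, eN j ∈ dirNE d := by
    intro j
    by_cases hj : j = i
    · obtain ⟨k, hk⟩ : ∃ k : Fin d, k ≠ i :=
        Fintype.exists_ne_of_one_lt_card (by rw [Fintype.card_fin]; omega) i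
      exact ⟨i, k, Ne.symm hk, Or.inl (by simp [heNdef, hj, hEd])⟩
    · by_cases hs : sg i * sg j = 1
      · exact ⟨i, j, fun h => hj h.symm, Or.inr (Or.inl (by simp [heNdef, hj, hs, hEd]))⟩
      · exact ⟨i, j, fun h => hj h.symm, Or.inr (Or.inr (by simp [heNdef, hj, hs, hEd]))⟩
  set v : Fin d → EuclideanSpace ℝ (Fin d) := fun j => sg i • eN j with hvdef
  have hv_eq : ∀ j, v j = sg i • Ed i + (if j = i then 0 else sg j • Ed j) := by
    intro j
    by_cases hj : j = i
    · simp [hvdef, heNdef, hj]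
    · by_cases hs : sg i * sg j = 1
      · have hsj : sg j = sg i := by
          rcases hsg_cases i with h | h <;> rcases hsg_cases j with h' | h' <;>
            rw [h, h'] at hs ⊢ <;> norm_num at hs
        simp only [hvdef, heNdef, if_neg hj]
        rw [if_pos hs, smul_add, hsj]
      · have hsj : sg j = -sg i := by
          rcases hsg_cases i with h | h <;> rcases hsg_cases j with h' | h' <;>
            rw [h, h'] at hs ⊢ <;> norm_num at hs <;> norm_num
        simp only [hvdef, heNdef, if_neg hj]
        rw [if_neg hs, smul_sub, hsj, neg_smul, ← sub_eq_add_neg]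
  have hv_inner_i : ∀ j, ⟪Ed i, v j⟫ = sg i := by
    intro j
    by_cases hj : j = i
    · rw [hv_eq j, if_pos hj, add_zero, real_inner_smul_right, hEdinner2, if_pos rfl, mul_one]
    · rw [hv_eq j, if_neg hj, inner_add_right, real_inner_smul_right, real_inner_smul_right,
        hEdinner2, hEdinner2, if_pos rfl, if_neg (fun h => hj h.symm)]
      ring
  have hx0Ed : ∀ k, ⟪x0, Ed k⟫ = x0 k := fun k => by rw [real_inner_comm, hEdinner]
  have hv_inner_x0 : ∀ j, m ≤ ⟪x0, v j⟫ := by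
    intro j
    by_cases hj : j = i
    · rw [hv_eq j, if_pos hj, add_zero, real_inner_smul_right, hx0Ed, hsg_mul, hm]
    · rw [hv_eq j, if_neg hj, inner_add_right, real_inner_smul_right, real_inner_smul_right,
        hx0Ed, hx0Ed, hsg_mul, hsg_mul, hm]
      linarith [abs_nonneg (x0 j)]
  have hv_norm : ∀ j, ‖v j‖ ≤ 2 := by
    intro j
    rw [hv_eq j]
    refine le_trans (norm_add_le _ _) ?_
    have h1 : ‖sg i • Ed i‖ = 1 := by
      rw [norm_smul, Real.norm_eq_abs, hsg_abs, hEdnorm, one_mul]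
    by_cases hj : j = i
    · rw [if_pos hj, norm_zero, h1]; norm_num
    · rw [if_neg hj, h1, norm_smul, Real.norm_eq_abs, hsg_abs, hEdnorm, one_mul]; norm_num
  set K : Set (EuclideanSpace ℝ (Fin d)) :=
    {w | ∃ c : Fin d → ℝ, (∀ j, 0 ≤ c j) ∧ w = ∑ j, c j • v j} with hKdef
  have hK_add : ∀ w1 ∈ K, ∀ w2 ∈ K, w1 + w2 ∈ K := by
    rintro w1 ⟨c1, hc1, rfl⟩ w2 ⟨c2, hc2, rfl⟩
    exact ⟨fun j => c1 j + c2 j, fun j => add_nonneg (hc1 j) (hc2 j), by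
      simp only [add_smul, Finset.sum_add_distrib]⟩
  have hK_smul : ∀ a : ℝ, 0 ≤ a → ∀ w ∈ K, a • w ∈ K := by
    rintro a ha w ⟨c, hc, rfl⟩
    exact ⟨fun j => a * c j, fun j => mul_nonneg ha (hc j), by
      rw [Finset.smul_sum]; simp only [smul_smul]⟩
  have hK_zero : (0 : EuclideanSpace ℝ (Fin d)) ∈ K :=
    ⟨fun _ => 0, fun _ => le_refl 0, by simp⟩
  have hK_inner_x0 : ∀ w ∈ K, 0 ≤ ⟪x0, w⟫ := by
    rintro w ⟨c, hc, rfl⟩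
    rw [inner_sum]
    simp only [real_inner_smul_right]
    exact Finset.sum_nonneg fun j _ =>
      mul_nonneg (hc j) (le_trans hm0.le (hv_inner_x0 j))
  have hK_sum_le : ∀ (c : Fin d → ℝ), (∀ j, 0 ≤ c j) → (∑ j, c j) ≤ ‖∑ j, c j • v j‖ := by
    intro c hc
    have h1 : ⟪Ed i, ∑ j, c j • v j⟫ = (∑ j, c j) * sg i := by
      rw [inner_sum]
      simp only [real_inner_smul_right, hv_inner_i]
      rw [← Finset.sum_mul]
    have h2 : |⟪Ed i, ∑ j, c j • v j⟫| ≤ ‖∑ j, c j • v j‖ := by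
      have := abs_real_inner_le_norm (Ed i) (∑ j, c j • v j)
      rwa [hEdnorm, one_mul] at this
    calc (∑ j, c j) = sg i * ⟪Ed i, ∑ j, c j • v j⟫ := by
          rw [h1]; linear_combination (-(∑ j, c j)) * (hsg_sq i)
      _ ≤ |sg i * ⟪Ed i, ∑ j, c j • v j⟫| := le_abs_self _
      _ = |⟪Ed i, ∑ j, c j • v j⟫| := by rw [abs_mul, hsg_abs, one_mul]
      _ ≤ ‖∑ j, c j • v j‖ := h2
  have hd0 : (0:ℝ) < d := by positivity
  have hd2 : (2:ℝ) ≤ (d:ℝ) := by exact_mod_cast hd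
  have hdecomp : ∀ h : EuclideanSpace ℝ (Fin d), h = ∑ j, (h j) • Ed j := by
    intro h
    have := (EuclideanSpace.basisFun (Fin d) ℝ).sum_repr h
    simp only [EuclideanSpace.basisFun_repr, EuclideanSpace.basisFun_apply] at this
    simp only [hEd]
    exact this.symm
  have hcoord : ∀ (h : EuclideanSpace ℝ (Fin d)) (j : Fin d), |h j| ≤ ‖h‖ := by
    intro h j
    have := abs_real_inner_le_norm (Ed j) h
    rwa [hEdinner, hEdnorm, one_mul] at this
  set ch : EuclideanSpace ℝ (Fin d) → Fin d → ℝ := fun h j =>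
    if j = i then sg i * h i - ∑ k ∈ Finset.univ.erase i, sg k * h k else sg j * h j with hchdef
  have hch_decomp : ∀ h : EuclideanSpace ℝ (Fin d), ∑ j, ch h j • v j = h := by
    intro h
    have hsum : ∑ j, ch h j = sg i * h i := by
      rw [← Finset.add_sum_erase _ _ (Finset.mem_univ i)]
      have he1 : ch h i = sg i * h i - ∑ k ∈ Finset.univ.erase i, sg k * h k := by
        simp only [hchdef, if_pos rfl]
      have he2 : ∑ k ∈ Finset.univ.erase i, ch h k = ∑ k ∈ Finset.univ.erase i, sg k * h k :=
        Finset.sum_congr rfl fun k hk => by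
          simp only [hchdef, if_neg (Finset.ne_of_mem_erase hk)]
      rw [he1, he2]; ring
    calc ∑ j, ch h j • v j
        = ∑ j, (ch h j • (sg i • Ed i) + ch h j • (if j = i then 0 else sg j • Ed j)) := by
          refine Finset.sum_congr rfl fun j _ => ?_
          rw [hv_eq j, smul_add]
      _ = (∑ j, ch h j) • (sg i • Ed i)
            + ∑ j, ch h j • (if j = i then 0 else sg j • Ed j) := by
          rw [Finset.sum_add_distrib, Finset.sum_smul]
      _ = (h i) • Ed i + ∑ j, (if j = i then (0:EuclideanSpace ℝ (Fin d)) else (h j) • Ed j) := by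
          congr 1
          · rw [hsum, smul_smul]
            congr 1
            linear_combination (h i) * hsg_sq i
          · refine Finset.sum_congr rfl fun j _ => ?_
            by_cases hj : j = i
            · simp [hj]
            · rw [if_neg hj, if_neg hj]
              have : ch h j = sg j * h j := by simp only [hchdef, if_neg hj]
              rw [this, smul_smul]
              congr 1
              linear_combination (h j) * hsg_sq j
      _ = h := by
          rw [← Finset.add_sum_erase _ (fun j => if j = i then (0:EuclideanSpace ℝ (Fin d)) else (h j) • Ed j) (Finset.mem_univ i)]
          rw [if_pos rfl, zero_add]
          have he3 : ∑ k ∈ Finset.univ.erase i,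
              (if k = i then (0:EuclideanSpace ℝ (Fin d)) else (h k) • Ed k)
              = ∑ k ∈ Finset.univ.erase i, (h k) • Ed k :=
            Finset.sum_congr rfl fun k hk => if_neg (Finset.ne_of_mem_erase hk)
          rw [he3]
          conv_rhs => rw [hdecomp h, ← Finset.add_sum_erase _ _ (Finset.mem_univ i)]
  set c0 : Fin d → ℝ := fun j => if j = i then (1:ℝ) else 1/(2*d) with hc0def
  have hc0_nonneg : ∀ j, 0 ≤ c0 j := by
    intro j
    by_cases hj : j = i <;> simp [hc0def, hj] <;> positivity
  have hc0_le : ∀ j, c0 j ≤ 1 := by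
    intro j
    by_cases hj : j = i
    · simp [hc0def, hj]
    · simp only [hc0def, if_neg hj]
      rw [div_le_one (by positivity)]
      linarith [hd2]
  have hcard_erase : ((Finset.univ.erase i).card : ℝ) = (d:ℝ) - 1 := by
    rw [Finset.card_erase_of_mem (Finset.mem_univ i), Finset.card_univ, Fintype.card_fin]
    rw [Nat.cast_sub (by omega : 1 ≤ d), Nat.cast_one]
  have hc0_sum : ∑ j, c0 j = 1 + ((d:ℝ) - 1) * (1/(2*d)) := by
    rw [← Finset.add_sum_erase _ _ (Finset.mem_univ i)]
    have h1 : c0 i = 1 := by simp [hc0def]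
    have h2 : ∑ k ∈ Finset.univ.erase i, c0 k = ((d:ℝ)-1) * (1/(2*d)) := by
      rw [Finset.sum_congr rfl (fun k hk => by
        simp only [hc0def, if_neg (Finset.ne_of_mem_erase hk)] : ∀ k ∈ Finset.univ.erase i, c0 k = 1/(2*d))]
      rw [Finset.sum_const, nsmul_eq_mul, hcard_erase]
    rw [h1, h2]
  set ν₀ : EuclideanSpace ℝ (Fin d) := ∑ j, c0 j • v j with hν₀def
  have hν₀_ball : ∀ h : EuclideanSpace ℝ (Fin d), ‖h‖ ≤ 1/(2*d) → ν₀ + h ∈ K := by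
    intro h hn
    have hberase : |∑ k ∈ Finset.univ.erase i, sg k * h k| ≤ ((d:ℝ)-1) * ‖h‖ := by
      refine le_trans (Finset.abs_sum_le_sum_abs _ _) ?_
      have hterm : ∀ k ∈ Finset.univ.erase i, |sg k * h k| ≤ ‖h‖ := fun k _ => by
        rw [abs_mul, hsg_abs, one_mul]; exact hcoord h k
      refine le_trans (Finset.sum_le_sum hterm) ?_
      rw [Finset.sum_const, nsmul_eq_mul, hcard_erase]
    have hd_half : (d:ℝ) * (1/(2*d)) = 1/2 := by field_simp
    refine ⟨fun j => c0 j + ch h j, ?_, ?_⟩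
    · intro j
      show 0 ≤ c0 j + ch h j
      by_cases hj : j = i
      · have h1 : |sg i * h i| ≤ ‖h‖ := by rw [abs_mul, hsg_abs, one_mul]; exact hcoord h i
        have h2 : c0 j = 1 := by simp [hc0def, hj]
        have h3 : ch h j = sg i * h i - ∑ k ∈ Finset.univ.erase i, sg k * h k := by
          simp only [hchdef, if_pos hj]
        rw [h2, h3]
        have hb1 := neg_le_of_abs_le h1
        have hb2 := le_of_abs_le hberase
        have hdn : (d:ℝ) * ‖h‖ ≤ 1/2 := by
          calc (d:ℝ) * ‖h‖ ≤ (d:ℝ) * (1/(2*d)) :=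
                mul_le_mul_of_nonneg_left hn hd0.le
            _ = 1/2 := hd_half
        nlinarith [norm_nonneg h]
      · have h2 : c0 j = 1/(2*d) := by simp [hc0def, hj]
        have h3 : ch h j = sg j * h j := by simp only [hchdef, if_neg hj]
        rw [h2, h3]
        have h1 : |sg j * h j| ≤ ‖h‖ := by rw [abs_mul, hsg_abs, one_mul]; exact hcoord h j
        have hb1 := neg_le_of_abs_le h1
        linarith
    · rw [hν₀def]
      simp only [add_smul, Finset.sum_add_distrib]
      rw [hch_decomp h]
  have hν₀_norm_ge : 1 ≤ ‖ν₀‖ := by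
    have h1 : ⟪Ed i, ν₀⟫ = (∑ j, c0 j) * sg i := by
      rw [hν₀def, inner_sum]
      simp only [real_inner_smul_right, hv_inner_i]
      rw [← Finset.sum_mul]
    have hs0 : 1 ≤ ∑ j, c0 j := by
      rw [hc0_sum]
      have : 0 ≤ ((d:ℝ)-1) * (1/(2*d)) := by
        apply mul_nonneg
        · linarith
        · positivity
      linarith
    calc (1:ℝ) ≤ |⟪Ed i, ν₀⟫| := by
          rw [h1, abs_mul, hsg_abs, mul_one, abs_of_nonneg (by linarith)]
          exact hs0
      _ ≤ ‖ν₀‖ := by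
          have := abs_real_inner_le_norm (Ed i) ν₀
          rwa [hEdnorm, one_mul] at this
  have hν₀_norm_le : ‖ν₀‖ ≤ 3 := by
    rw [hν₀def]
    refine le_trans (norm_sum_le _ _) ?_
    have hstep : ∀ j ∈ Finset.univ, ‖c0 j • v j‖ ≤ c0 j * 2 := fun j _ => by
      rw [norm_smul, Real.norm_eq_abs, abs_of_nonneg (hc0_nonneg j)]
      exact mul_le_mul_of_nonneg_left (hv_norm j) (hc0_nonneg j)
    refine le_trans (Finset.sum_le_sum hstep) ?_
    rw [← Finset.sum_mul, hc0_sum]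
    have : ((d:ℝ)-1) * (1/(2*d)) ≤ 1/2 := by
      rw [mul_one_div, div_le_iff₀ (by positivity : (0:ℝ) < 2*d)]
      linarith
    linarith
  have hν₀_x0 : m ≤ ⟪x0, ν₀⟫ := by
    rw [hν₀def, inner_sum]
    simp only [real_inner_smul_right]
    rw [← Finset.add_sum_erase _ _ (Finset.mem_univ i)]
    have h1 : m ≤ c0 i * ⟪x0, v i⟫ := by
      have : c0 i = 1 := by simp [hc0def]
      rw [this, one_mul]
      exact hv_inner_x0 i
    have h2 : 0 ≤ ∑ k ∈ Finset.univ.erase i, c0 k * ⟪x0, v k⟫ :=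
      Finset.sum_nonneg fun k _ =>
        mul_nonneg (hc0_nonneg k) (le_trans hm0.le (hv_inner_x0 k))
    linarith
  set ν : EuclideanSpace ℝ (Fin d) := ‖ν₀‖⁻¹ • ν₀ with hνdef
  have hν_norm : ‖ν‖ = 1 := by
    have h0 : ‖ν₀‖ ≠ 0 := by linarith
    rw [hνdef, norm_smul, Real.norm_eq_abs, abs_of_nonneg (inv_nonneg.2 (norm_nonneg _)),
      inv_mul_cancel₀ h0]
  have hn0 : (0:ℝ) < ‖ν₀‖ := lt_of_lt_of_le one_pos hν₀_norm_ge
  have hν_ball : ∀ h : EuclideanSpace ℝ (Fin d), ‖h‖ ≤ 1/(6*d) → ν + h ∈ K := by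
    intro h hn
    have heq : ν + h = ‖ν₀‖⁻¹ • (ν₀ + ‖ν₀‖ • h) := by
      rw [smul_add, smul_smul, inv_mul_cancel₀ hn0.ne', one_smul, hνdef]
    have hnrm : ‖‖ν₀‖ • h‖ ≤ 1/(2*d) := by
      rw [norm_smul, Real.norm_eq_abs, abs_of_pos hn0]
      calc ‖ν₀‖ * ‖h‖ ≤ 3 * (1/(6*d)) :=
            mul_le_mul hν₀_norm_le hn (norm_nonneg h) (by norm_num)
        _ = 1/(2*d) := by field_simp; ring
    rw [heq]
    exact hK_smul _ (by positivity) _ (hν₀_ball _ hnrm)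
  have hν_mem : ν ∈ K := by
    have := hν_ball 0 (by rw [norm_zero]; positivity)
    simpa using this
  have hν_x0 : m/3 ≤ ⟪x0, ν⟫ := by
    rw [hνdef, real_inner_smul_right]
    have h13 : 1/3 ≤ ‖ν₀‖⁻¹ := by
      rw [← one_div]
      exact one_div_le_one_div_of_le hn0 hν₀_norm_le |>.trans_eq' (by norm_num) |>.trans (le_refl _)
    calc m/3 = 1/3 * m := by ring
      _ ≤ ‖ν₀‖⁻¹ * ⟪x0, ν₀⟫ :=
          mul_le_mul h13 hν₀_x0 hm0.le (inv_nonneg.2 (norm_nonneg _))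
  set L₁ : ℝ := 6*d with hL₁def
  have hL₁0 : 0 < L₁ := by positivity
  set L₂ : ℝ := 3*‖x0‖/m with hL₂def
  have hL₂0 : 0 ≤ L₂ := by positivity
  have hmemA : ∀ q : EuclideanSpace ℝ (Fin d), (L₁*‖q‖) • ν + q ∈ K := by
    intro q
    rcases eq_or_ne q 0 with rfl | hq
    · simpa using hK_zero
    · have hq0 : 0 < ‖q‖ := norm_pos_iff.2 hq
      have hne : (L₁*‖q‖) ≠ 0 := by positivity
      have hq2 : (L₁*‖q‖) • ((L₁*‖q‖)⁻¹ • q) = q := by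
        rw [smul_smul, mul_inv_cancel₀ hne, one_smul]
      have heq : (L₁*‖q‖) • ν + q = (L₁*‖q‖) • (ν + (L₁*‖q‖)⁻¹ • q) := by
        rw [smul_add, hq2]
      rw [heq]
      refine hK_smul _ (by positivity) _ (hν_ball _ ?_)
      rw [norm_smul, Real.norm_eq_abs, abs_of_pos (by positivity : 0 < (L₁*‖q‖)⁻¹),
        mul_inv, mul_assoc, inv_mul_cancel₀ hq0.ne', mul_one, one_div, hL₁def]
  have hlbA : ∀ q : EuclideanSpace ℝ (Fin d), ∀ a : ℝ, a • ν + q ∈ K → -(L₂*‖q‖) ≤ a := by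
    intro q a ha
    have h0 := hK_inner_x0 _ ha
    rw [inner_add_right, real_inner_smul_right] at h0
    have h1 : ⟪x0, q⟫ ≤ ‖x0‖ * ‖q‖ := real_inner_le_norm x0 q
    by_contra hcon
    push_neg at hcon
    have hL2q : 0 ≤ L₂ * ‖q‖ := mul_nonneg hL₂0 (norm_nonneg q)
    have ha0 : a < 0 := lt_of_lt_of_le hcon (by linarith)
    have h3 : a * ⟪x0, ν⟫ ≤ a * (m/3) := mul_le_mul_of_nonpos_left hν_x0 ha0.le
    have h4 : a * (m/3) < -(L₂*‖q‖) * (m/3) := by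
      apply mul_lt_mul_of_pos_right hcon
      positivity
    have h5 : -(L₂*‖q‖)*(m/3) = -(‖x0‖*‖q‖) := by
      rw [hL₂def]
      field_simp
    linarith
  set ϕ : EuclideanSpace ℝ (Fin d) → ℝ := fun q => sInf {a : ℝ | a • ν + q ∈ K} with hϕdef
  have hϕ_ne : ∀ q, {a : ℝ | a • ν + q ∈ K}.Nonempty := fun q => ⟨L₁*‖q‖, hmemA q⟩
  have hϕ_bdd : ∀ q, BddBelow {a : ℝ | a • ν + q ∈ K} := fun q => ⟨-(L₂*‖q‖), fun a ha => hlbA q a ha⟩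
  have hϕ_ub : ∀ q, ϕ q ≤ L₁ * ‖q‖ := fun q => csInf_le (hϕ_bdd q) (hmemA q)
  have hϕ_lb : ∀ q, -(L₂ * ‖q‖) ≤ ϕ q := fun q => le_csInf (hϕ_ne q) (fun a ha => hlbA q a ha)
  have hϕ_zero : ϕ 0 ≤ 0 := by
    have := hϕ_ub 0
    simpa using this
  have hϕ_lip : ∀ q p : EuclideanSpace ℝ (Fin d), ϕ (q + p) ≤ ϕ q + L₁ * ‖p‖ := by
    intro q p
    have hkey : ∀ a ∈ {a : ℝ | a • ν + q ∈ K}, ϕ (q+p) - L₁ * ‖p‖ ≤ a := by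
      intro a ha
      have hmem : (a + L₁*‖p‖) • ν + (q+p) ∈ K := by
        have heq : (a + L₁*‖p‖) • ν + (q+p) = (a • ν + q) + ((L₁*‖p‖) • ν + p) := by
          rw [add_smul]; abel
        rw [heq]
        exact hK_add _ ha _ (hmemA p)
      have := csInf_le (hϕ_bdd (q+p)) hmem
      have h2 : ϕ (q+p) ≤ a + L₁*‖p‖ := by rw [hϕdef]; exact this
      linarith
    have := le_csInf (hϕ_ne q) hkey
    rw [hϕdef]
    simp only []
    linarith [this]
  have hϕ_mem : ∀ (q : EuclideanSpace ℝ (Fin d)) (b : ℝ), ϕ q < b → b • ν + q ∈ K := by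
    intro q b hb
    rw [hϕdef] at hb
    obtain ⟨a, ha, hab⟩ := exists_lt_of_csInf_lt (hϕ_ne q) hb
    have heq : b • ν + q = (a • ν + q) + ((b - a) • ν) := by
      rw [sub_smul]; abel
    rw [heq]
    exact hK_add _ ha _ (hK_smul _ (by linarith) _ hν_mem)
  set ρ : ℝ := m/24 with hρdef
  have hρ0 : 0 < ρ := by positivity
  have hwalk : ∀ t : Finset (Fin d), ∀ c : Fin d → ℝ, (∀ j, 0 ≤ c j) →
      ∀ x ∈ V, ‖x - x0‖ + 2 * ∑ j ∈ t, c j ≤ 5*ρ → x - ∑ j ∈ t, c j • v j ∈ V := by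
    intro t
    induction t using Finset.induction_on with
    | empty => intro c hc x hx hbound; simpa using hx
    | @insert a t' hat IH =>
      intro c hc x hx hbound
      rw [Finset.sum_insert hat] at hbound
      rw [Finset.sum_insert hat]
      have hsum_nonneg : 0 ≤ ∑ j ∈ t', c j := Finset.sum_nonneg fun j _ => hc j
      have hxnn : 0 ≤ ‖x - x0‖ := norm_nonneg _
      have hca : c a ≤ 5*ρ/2 := by linarith
      have hxx0 : ‖x - x0‖ ≤ 5*ρ := by linarith [hc a]
      have hinner : m - 10*ρ ≤ ⟪x, v a⟫ := by
        have h1 : m ≤ ⟪x0, v a⟫ := hv_inner_x0 a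
        have h2 : |⟪x - x0, v a⟫| ≤ ‖x - x0‖ * ‖v a‖ := abs_real_inner_le_norm _ _
        have h2' : -(‖x - x0‖ * ‖v a‖) ≤ ⟪x - x0, v a⟫ := neg_le_of_abs_le h2
        have h3 : ⟪x, v a⟫ - ⟪x0, v a⟫ = ⟪x - x0, v a⟫ := (inner_sub_left x x0 (v a)).symm
        have h4 : ‖x - x0‖ * ‖v a‖ ≤ 5*ρ*2 :=
          mul_le_mul hxx0 (hv_norm a) (norm_nonneg _) (by linarith)
        linarith
      have hva_sq : ‖v a‖^2 ≤ 4 := by nlinarith [hv_norm a, norm_nonneg (v a)]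
      have hstep : ‖x - c a • v a‖ ≤ ‖x‖ := by
        have hsq : ‖x - c a • v a‖^2 ≤ ‖x‖^2 := by
          rw [norm_sub_sq_real, real_inner_smul_right]
          have hns : ‖c a • v a‖^2 = (c a)^2 * ‖v a‖^2 := by
            rw [norm_smul, mul_pow, Real.norm_eq_abs, sq_abs]
          rw [hns]
          have hkey : (c a)^2 * ‖v a‖^2 ≤ 2 * (c a * ⟪x, v a⟫) := by
            have e1 : (c a)^2 * ‖v a‖^2 ≤ (c a)^2 * 4 :=
              mul_le_mul_of_nonneg_left hva_sq (sq_nonneg _)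
            have e2 : (c a)^2 * 4 ≤ (c a) * (5*ρ/2) * 4 := by
              nlinarith [hc a]
            have e3 : c a * (m - 10*ρ) ≤ c a * ⟪x, v a⟫ :=
              mul_le_mul_of_nonneg_left hinner (hc a)
            have hρm : ρ = m/24 := hρdef
            nlinarith [hc a, hm0]
          linarith
        exact le_of_pow_le_pow_left₀ two_ne_zero (norm_nonneg x) hsq
      have harr : x + (-(c a) * sg i) • eN a = x - c a • v a := by
        have : (-(c a) * sg i) • eN a = -(c a • v a) := by
          rw [hvdef]
          simp only []
          rw [smul_smul, neg_mul, neg_smul]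
        rw [this, ← sub_eq_add_neg]
      have hxV' : x - c a • v a ∈ V := by
        have := monoV hmono hd hc₀ hball hx (heN_mem a) (-(c a) * sg i) (by rw [harr]; exact hstep)
        rwa [harr] at this
      have hbound' : ‖(x - c a • v a) - x0‖ + 2 * ∑ j ∈ t', c j ≤ 5*ρ := by
        have hn1 : ‖(x - c a • v a) - x0‖ ≤ ‖x - x0‖ + ‖c a • v a‖ := by
          have : (x - c a • v a) - x0 = (x - x0) - c a • v a := by abel
          rw [this]
          exact norm_sub_le _ _
        have hn2 : ‖c a • v a‖ ≤ c a * 2 := by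
          rw [norm_smul, Real.norm_eq_abs, abs_of_nonneg (hc a)]
          exact mul_le_mul_of_nonneg_left (hv_norm a) (hc a)
        linarith
      have hfin := IH c hc (x - c a • v a) hxV' hbound'
      rwa [sub_sub] at hfin
  set D : Set (EuclideanSpace ℝ (Fin d)) := V ∩ Metric.closedBall x0 ρ with hDdef
  have hx0D : x0 ∈ D := ⟨hx0V, Metric.mem_closedBall_self hρ0.le⟩
  set L : ℝ := max L₁ L₂ + 1 with hLdef
  have hL0 : 0 < L := by
    have : (0:ℝ) ≤ max L₁ L₂ := le_trans hL₁0.le (le_max_left _ _)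
    linarith
  set f : EuclideanSpace ℝ (Fin d) → ↥((ℝ ∙ ν)ᗮ) → ℝ :=
    fun x y => ⟪x, ν⟫ - ϕ ((x - ⟪x, ν⟫ • ν) - (y : EuclideanSpace ℝ (Fin d))) with hfdef
  have hinner_norm : ∀ x : EuclideanSpace ℝ (Fin d), |⟪x, ν⟫| ≤ ‖x‖ := by
    intro x
    have := abs_real_inner_le_norm x ν
    rwa [hν_norm, mul_one] at this
  have hfbdd : ∀ y, BddAbove ((fun x => f x y) '' D) := by
    intro y
    refine ⟨(‖x0‖ + ρ) + L₂ * (2*(‖x0‖+ρ) + ‖(y : EuclideanSpace ℝ (Fin d))‖), ?_⟩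
    rintro b ⟨x, ⟨hxV, hxB⟩, rfl⟩
    have hxn : ‖x‖ ≤ ‖x0‖ + ρ := by
      rw [Metric.mem_closedBall, dist_eq_norm] at hxB
      have := norm_sub_norm_le x x0
      linarith
    have h1 : ⟪x, ν⟫ ≤ ‖x‖ := le_of_abs_le (hinner_norm x)
    have h2 := hϕ_lb ((x - ⟪x, ν⟫ • ν) - (y : EuclideanSpace ℝ (Fin d)))
    have h3 : ‖(x - ⟪x, ν⟫ • ν) - (y : EuclideanSpace ℝ (Fin d))‖
        ≤ 2*(‖x0‖+ρ) + ‖(y : EuclideanSpace ℝ (Fin d))‖ := by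
      refine le_trans (norm_sub_le _ _) ?_
      have h4 : ‖x - ⟪x, ν⟫ • ν‖ ≤ ‖x‖ + |⟪x, ν⟫| := by
        refine le_trans (norm_sub_le _ _) ?_
        rw [norm_smul, Real.norm_eq_abs, hν_norm, mul_one]
      have h5 := hinner_norm x
      linarith
    have h6 := mul_le_mul_of_nonneg_left h3 hL₂0
    show ⟪x, ν⟫ - ϕ ((x - ⟪x, ν⟫ • ν) - (y : EuclideanSpace ℝ (Fin d)))
        ≤ (‖x0‖ + ρ) + L₂ * (2*(‖x0‖+ρ) + ‖(y : EuclideanSpace ℝ (Fin d))‖)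
    linarith
  have hfne : ∀ y, ((fun x => f x y) '' D).Nonempty := fun y => ⟨f x0 y, ⟨x0, hx0D, rfl⟩⟩
  set g : ↥((ℝ ∙ ν)ᗮ) → ℝ := fun y => sSup ((fun x => f x y) '' D) with hgdef
  have hf_lip : ∀ x y1 y2, f x y1 ≤ f x y2 + L₁ * ‖(y1 : EuclideanSpace ℝ (Fin d)) - (y2 : EuclideanSpace ℝ (Fin d))‖ := by
    intro x y1 y2
    have hlip := hϕ_lip ((x - ⟪x, ν⟫ • ν) - (y1 : EuclideanSpace ℝ (Fin d)))
      ((y1 : EuclideanSpace ℝ (Fin d)) - (y2 : EuclideanSpace ℝ (Fin d)))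
    have heq : ((x - ⟪x, ν⟫ • ν) - (y1 : EuclideanSpace ℝ (Fin d)))
        + ((y1 : EuclideanSpace ℝ (Fin d)) - (y2 : EuclideanSpace ℝ (Fin d)))
        = (x - ⟪x, ν⟫ • ν) - (y2 : EuclideanSpace ℝ (Fin d)) := by abel
    rw [heq] at hlip
    show ⟪x, ν⟫ - ϕ ((x - ⟪x, ν⟫ • ν) - (y1 : EuclideanSpace ℝ (Fin d)))
        ≤ ⟪x, ν⟫ - ϕ ((x - ⟪x, ν⟫ • ν) - (y2 : EuclideanSpace ℝ (Fin d)))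
          + L₁ * ‖(y1 : EuclideanSpace ℝ (Fin d)) - (y2 : EuclideanSpace ℝ (Fin d))‖
    linarith
  have hg_lip1 : ∀ y1 y2, g y1 ≤ g y2 + L₁ * ‖(y1 : EuclideanSpace ℝ (Fin d)) - (y2 : EuclideanSpace ℝ (Fin d))‖ := by
    intro y1 y2
    have hcs : g y1 ≤ g y2 + L₁ * ‖(y1 : EuclideanSpace ℝ (Fin d)) - (y2 : EuclideanSpace ℝ (Fin d))‖ := by
      rw [hgdef]
      refine csSup_le (hfne y1) ?_
      rintro b ⟨x, hx, rfl⟩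
      have h1 := hf_lip x y1 y2
      have h2 : f x y2 ≤ sSup ((fun x => f x y2) '' D) :=
        le_csSup (hfbdd y2) ⟨x, hx, rfl⟩
      linarith
    exact hcs
  refine ⟨ρ/2, L, ν, by linarith, hL0, hν_norm, g, ?_, ?_⟩
  · intro y1 y2
    have h1 := hg_lip1 y1 y2
    have h2 := hg_lip1 y2 y1
    have hL₁L : L₁ ≤ L := by
      have := le_max_left L₁ L₂; rw [hLdef]; linarith
    have hnn : (0:ℝ) ≤ ‖(y1 : EuclideanSpace ℝ (Fin d)) - (y2 : EuclideanSpace ℝ (Fin d))‖ := norm_nonneg _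
    have hmul := mul_le_mul_of_nonneg_right hL₁L hnn
    rw [abs_le]
    constructor
    · rw [norm_sub_rev] at h2
      linarith
    · linarith
  · ext z
    simp only [Set.mem_inter_iff, Set.mem_setOf_eq]
    constructor
    · rintro ⟨hzV, hzB⟩
      refine ⟨?_, hzB⟩
      have hyo : z - ⟪z, ν⟫ • ν ∈ (ℝ ∙ ν)ᗮ := by
        rw [Submodule.mem_orthogonal_singleton_iff_inner_right]
        rw [inner_sub_right, real_inner_smul_right]
        have hself : ⟪ν, ν⟫ = 1 := by
          rw [real_inner_self_eq_norm_mul_norm, hν_norm, mul_one]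
        rw [hself, mul_one, real_inner_comm, sub_self]
      have hzD : z ∈ D := by
        refine ⟨hzV, ?_⟩
        rw [Metric.mem_ball] at hzB
        rw [Metric.mem_closedBall]
        linarith
      refine ⟨⟨z - ⟪z, ν⟫ • ν, hyo⟩, ⟪z, ν⟫, ?_, by simp⟩
      have hfz : f z ⟨z - ⟪z, ν⟫ • ν, hyo⟩ = ⟪z, ν⟫ - ϕ 0 := by
        show ⟪z, ν⟫ - ϕ ((z - ⟪z, ν⟫ • ν) - (z - ⟪z, ν⟫ • ν)) = ⟪z, ν⟫ - ϕ 0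
        rw [sub_self]
      calc ⟪z, ν⟫ ≤ f z ⟨z - ⟪z, ν⟫ • ν, hyo⟩ := by rw [hfz]; linarith [hϕ_zero]
        _ ≤ g ⟨z - ⟪z, ν⟫ • ν, hyo⟩ := le_csSup (hfbdd _) ⟨z, hzD, rfl⟩
    · rintro ⟨⟨y, t, hty, hzeq⟩, hzB⟩
      refine ⟨?_, hzB⟩
      have hkey : ∀ δ : ℝ, 0 < δ → δ ≤ ρ/2 → z - δ • ν ∈ V := by
        intro δ hδ0 hδr
        have hlt : t - δ < g y := lt_of_lt_of_le (by linarith) hty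
        rw [hgdef] at hlt
        obtain ⟨b, ⟨x, hxD, rfl⟩, hb⟩ := exists_lt_of_lt_csSup (hfne y) hlt
        have hϕlt : ϕ ((x - ⟪x, ν⟫ • ν) - (y : EuclideanSpace ℝ (Fin d))) < ⟪x, ν⟫ - (t - δ) := by
          have : t - δ < ⟪x, ν⟫ - ϕ ((x - ⟪x, ν⟫ • ν) - (y : EuclideanSpace ℝ (Fin d))) := hb
          linarith
        have hKmem := hϕ_mem _ _ hϕlt
        have harr : (⟪x, ν⟫ - (t - δ)) • ν + ((x - ⟪x, ν⟫ • ν) - (y : EuclideanSpace ℝ (Fin d)))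
            = x - (z - δ • ν) := by
          rw [hzeq, sub_smul, sub_smul]
          abel
        rw [harr] at hKmem
        obtain ⟨c, hc, hwc⟩ := hKmem
        have hsum : (∑ j, c j) ≤ ‖x - (z - δ • ν)‖ := by
          rw [hwc]
          exact hK_sum_le c hc
        have hwnorm : ‖x - (z - δ • ν)‖ ≤ 2*ρ := by
          have hxB := hxD.2
          rw [Metric.mem_closedBall, dist_eq_norm] at hxB
          rw [Metric.mem_ball, dist_eq_norm] at hzB
          have hsplit : x - (z - δ • ν) = (x - x0) + (x0 - z) + δ • ν := by abel
          rw [hsplit]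
          have hn1 : ‖(x - x0) + (x0 - z) + δ • ν‖ ≤ ‖x - x0‖ + ‖x0 - z‖ + ‖δ • ν‖ :=
            le_trans (norm_add_le _ _) (by linarith [norm_add_le (x - x0) (x0 - z)])
          have hn2 : ‖x0 - z‖ < ρ/2 := by rw [norm_sub_rev]; exact hzB
          have hn3 : ‖δ • ν‖ ≤ ρ/2 := by
            rw [norm_smul, Real.norm_eq_abs, hν_norm, mul_one, abs_of_pos hδ0]
            exact hδr
          linarith
        have hwalked := hwalk Finset.univ c hc x hxD.1 (by
          have hxB := hxD.2
          rw [Metric.mem_closedBall, dist_eq_norm] at hxB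
          linarith)
        rw [← hwc, sub_sub_cancel] at hwalked
        exact hwalked
      have htd : Tendsto (fun n : ℕ => (ρ/2) * (1/(n+1))) atTop (𝓝 0) := by
        simpa using tendsto_one_div_add_atTop_nhds_zero_nat.const_mul (ρ/2)
      have htd2 : Tendsto (fun n : ℕ => z - ((ρ/2) * (1/(n+1))) • ν) atTop (𝓝 z) := by
        have := (htd.smul_const ν).const_sub z
        simpa using this
      refine hVclosed.mem_of_tendsto htd2 (Eventually.of_forall fun n => ?_)
      apply hkey
      · have h1 : (0:ℝ) < 1/((n:ℝ)+1) := by positivity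
        exact mul_pos (by linarith : (0:ℝ) < ρ/2) h1
      · have h2 : (1:ℝ)/((n:ℝ)+1) ≤ 1 := by
          rw [div_le_one (by positivity)]
          exact le_add_of_nonneg_left (Nat.cast_nonneg n)
        calc ρ/2 * (1/((n:ℝ)+1)) ≤ ρ/2 * 1 :=
              mul_le_mul_of_nonneg_left h2 (by linarith)
          _ = ρ/2 := mul_one _


end LipschitzFB
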